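/- Let G be a connected finite simple graph on n vertices and t ≥ 1 an integer. Let μ_1 ≤ μ_2 ≤ ... ≤ μ_n be the Laplacian eigenvalues of the complement of the exact distance t-power G^{[#t]}, and assume μ_n > 0. Then eq_t(G) ≤ n · (1 − μ_2/μ_n) + 1. -/

import Mathlib

open SimpleGraph

/-- `S` is a `t`-equidistant set of `G`: all distinct vertices of `S` are at distance
exactly `t` in `G`. -/
def IsEquidistantSet {V : Type*} (G : SimpleGraph V) (t : ℕ) (S : Finset V) : Prop :=
  (S : Set V).Pairwise fun u v => G.dist u v = t

/-- The `t`-equidistant number of `G`: the maximum size of a `t`-equidistant set. -/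
noncomputable def eqNum {V : Type*} [Fintype V] (G : SimpleGraph V) (t : ℕ) : ℕ :=
  sSup {n : ℕ | ∃ S : Finset V, IsEquidistantSet G t S ∧ S.card = n}

/-- `S` is a `t`-independent set of `G`: all distinct vertices of `S` are at pairwise
distance greater than `t` in `G`. -/
def IsTIndepSet {V : Type*} (G : SimpleGraph V) (t : ℕ) (S : Finset V) : Prop :=
  (S : Set V).Pairwise fun u v => t < G.dist u v

/-- The `t`-independence number of `G`. -/
noncomputable def indepNumT {V : Type*} [Fintype V] (G : SimpleGraph V) (t : ℕ) : ℕ :=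
  sSup {n : ℕ | ∃ S : Finset V, IsTIndepSet G t S ∧ S.card = n}

/-- The equidistant number of `G`: `max {eq_t(G) : 1 ≤ t ≤ diam G}`. -/
noncomputable def eqTotalNum {V : Type*} [Fintype V] (G : SimpleGraph V) : ℕ :=
  (Finset.Icc 1 G.diam).sup (eqNum G)

open scoped Classical

/-- The exact distance `t`-power of `G`: same vertex set, two distinct vertices adjacent iff
they are at distance exactly `t` in `G`. -/
def exactPower {V : Type*} (G : SimpleGraph V) (t : ℕ) : SimpleGraph V where
  Adj u v := u ≠ v ∧ G.dist u v = t
  symm := by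
    constructor
    intro u v h
    exact ⟨h.1.symm, by rw [SimpleGraph.dist_comm]; exact h.2⟩
  loopless := by
    constructor
    intro u h
    exact h.1 rfl

open Matrix

lemma sum_ite_indicator {V : Type*} [Fintype V] [DecidableEq V] (S : Finset V) (f : V → ℝ) :
    ∑ u, (if u ∈ S then (1:ℝ) else 0) * f u = ∑ u ∈ S, f u := by
  simp [ite_mul, Finset.sum_ite_mem]

section Spectral
variable {V : Type*} [Fintype V] [DecidableEq V] {L : Matrix V V ℝ} (hL : L.IsHermitian)

noncomputable def Tmat (hL : L.IsHermitian) : Matrix V V ℝ :=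
  star (hL.eigenvectorUnitary : Matrix V V ℝ)

lemma Tmat_mul : (hL.eigenvectorUnitary : Matrix V V ℝ) * Tmat hL = 1 :=
  (Matrix.mem_unitaryGroup_iff).mp hL.eigenvectorUnitary.2

lemma dot_U (x z : V → ℝ) :
    x ⬝ᵥ ((hL.eigenvectorUnitary : Matrix V V ℝ) *ᵥ z) = (Tmat hL *ᵥ x) ⬝ᵥ z := by
  rw [dotProduct_mulVec]
  congr 1
  rw [Tmat, star_eq_conjTranspose, conjTranspose_eq_transpose_of_trivial, mulVec_transpose]

lemma quad_expand (x : V → ℝ) :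
    x ⬝ᵥ (L *ᵥ x) = ∑ i, hL.eigenvalues i * ((Tmat hL *ᵥ x) i)^2 := by
  conv_lhs => rw [hL.spectral_theorem]
  rw [Unitary.conjStarAlgAut_apply, ← mulVec_mulVec, ← mulVec_mulVec, dot_U]
  show (Tmat hL *ᵥ x) ⬝ᵥ (diagonal (RCLike.ofReal ∘ hL.eigenvalues) *ᵥ (Tmat hL *ᵥ x)) = _
  simp [dotProduct, mulVec_diagonal]
  congr 1; ext i; ring

lemma norm_expand (x : V → ℝ) :
    x ⬝ᵥ x = ∑ i, ((Tmat hL *ᵥ x) i)^2 := by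
  have h : x ⬝ᵥ x = (Tmat hL *ᵥ x) ⬝ᵥ (Tmat hL *ᵥ x) := by
    rw [← dot_U hL, mulVec_mulVec, Tmat_mul, one_mulVec]
  rw [h]
  simp [dotProduct]; congr 1; ext i; ring

lemma dot_preserve (x z : V → ℝ) :
    x ⬝ᵥ z = (Tmat hL *ᵥ x) ⬝ᵥ (Tmat hL *ᵥ z) := by
  rw [← dot_U hL, mulVec_mulVec, Tmat_mul, one_mulVec]

lemma rayleigh_upper (hi : ℝ) (hhi : ∀ i, hL.eigenvalues i ≤ hi) (x : V → ℝ) :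
    x ⬝ᵥ (L *ᵥ x) ≤ hi * (x ⬝ᵥ x) := by
  rw [quad_expand hL, norm_expand hL, Finset.mul_sum]
  apply Finset.sum_le_sum
  intro i _
  have := sq_nonneg ((Tmat hL *ᵥ x) i)
  nlinarith [hhi i]

lemma rayleigh_lower [Nonempty V] (lo : ℝ) (i₀ : V)
    (hnn : ∀ i, 0 ≤ hL.eigenvalues i)
    (hlo : ∀ i, i ≠ i₀ → lo ≤ hL.eigenvalues i)
    (hipos : ∀ i, i ≠ i₀ → 0 < hL.eigenvalues i)
    (hone : L *ᵥ (fun _ => (1:ℝ)) = 0)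
    (x : V → ℝ) (hx : x ⬝ᵥ (fun _ => (1:ℝ)) = 0) :
    lo * (x ⬝ᵥ x) ≤ x ⬝ᵥ (L *ᵥ x) := by
  set d : V → ℝ := Tmat hL *ᵥ (fun _ => (1:ℝ)) with hd
  have hzero : ∀ i, i ≠ i₀ → d i = 0 := by
    have hq : (0:ℝ) = ∑ i, hL.eigenvalues i * (d i)^2 := by
      rw [← quad_expand hL]
      rw [hone]; simp
    have hterm : ∀ i ∈ Finset.univ, (0:ℝ) ≤ hL.eigenvalues i * (d i)^2 := by
      intro i _; exact mul_nonneg (hnn i) (sq_nonneg _)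
    have := (Finset.sum_eq_zero_iff_of_nonneg hterm).mp hq.symm
    intro i hi
    have h0 := this i (Finset.mem_univ i)
    have := hipos i hi
    have : (d i)^2 = 0 := by
      by_contra h
      exact h (by nlinarith)
    exact pow_eq_zero_iff (by norm_num) |>.mp this
  have hdne : d i₀ ≠ 0 := by
    intro h
    have h1 : ((fun _ => (1:ℝ)) : V → ℝ) ⬝ᵥ (fun _ => (1:ℝ)) = ∑ i, (d i)^2 := norm_expand hL _
    have hcard : ((fun _ => (1:ℝ)) : V → ℝ) ⬝ᵥ (fun _ => (1:ℝ)) = (Fintype.card V : ℝ) := by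
      simp [dotProduct]
    have : ∑ i, (d i)^2 = 0 := by
      apply Finset.sum_eq_zero
      intro i _
      by_cases hii : i = i₀
      · rw [hii, h]; ring
      · rw [hzero i hii]; ring
    rw [hcard, this] at h1
    have : 0 < Fintype.card V := Fintype.card_pos
    exact absurd h1 (by positivity)
  have hx0 : (Tmat hL *ᵥ x) i₀ = 0 := by
    have h2 : x ⬝ᵥ (fun _ => (1:ℝ)) = ∑ i, (Tmat hL *ᵥ x) i * d i := by
      rw [dot_preserve hL]; rfl
    have h3 : ∑ i, (Tmat hL *ᵥ x) i * d i = (Tmat hL *ᵥ x) i₀ * d i₀ := by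
      apply Finset.sum_eq_single
      · intro i _ hi; rw [hzero i hi]; ring
      · intro h; exact absurd (Finset.mem_univ i₀) h
    rw [hx] at h2
    have h4 : (Tmat hL *ᵥ x) i₀ * d i₀ = 0 := h3.symm.trans h2.symm
    rcases mul_eq_zero.mp h4 with h | h
    · exact h
    · exact absurd h hdne
  rw [quad_expand hL, norm_expand hL, Finset.mul_sum]
  apply Finset.sum_le_sum
  intro i _
  by_cases hii : i = i₀
  · rw [hii, hx0]; simp
  · have := sq_nonneg ((Tmat hL *ᵥ x) i)
    nlinarith [hlo i hii]

end Spectral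


/-- Let `G` be connected on `n` vertices, `t ≥ 1`, and let
`μ_1 ≤ ⋯ ≤ μ_n` be the Laplacian eigenvalues of the complement of `G^{[#t]}`. If `μ_n > 0`
then `eq_t(G) ≤ n (1 - μ_2/μ_n) + 1`. -/
theorem eqNum_le_haemers_phi_bound {V : Type*} [Fintype V] (G : SimpleGraph V)
    (hG : G.Connected) (n : ℕ) (hn : Fintype.card V = n) (hn2 : 2 ≤ n)
    (t : ℕ) (ht : 1 ≤ t)
    (hL : ((exactPower G t)ᶜ.lapMatrix ℝ).IsHermitian)
    (μ : Fin n → ℝ) (hmono : Monotone μ)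
    (hlist : ∃ e : Fin n ≃ V, ∀ i, μ i = hL.eigenvalues (e i))
    (hpos : (0 : ℝ) < μ ⟨n - 1, by omega⟩) :
    (eqNum G t : ℝ) ≤ n * (1 - μ ⟨1, by omega⟩ / μ ⟨n - 1, by omega⟩) + 1 := by
  classical
  obtain ⟨e, he⟩ := hlist
  set μ2 : ℝ := μ ⟨1, by omega⟩ with hμ2def
  set μN : ℝ := μ ⟨n - 1, by omega⟩ with hμNdef
  set H : SimpleGraph V := (exactPower G t)ᶜ with hH
  have hμ2N : μ2 ≤ μN := hmono (by simp [Fin.le_def]; omega)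
  have hPSD : (H.lapMatrix ℝ).PosSemidef := SimpleGraph.posSemidef_lapMatrix ℝ H
  have hnn : ∀ i, 0 ≤ hL.eigenvalues i := fun i => hPSD.eigenvalues_nonneg i
  have hμ2nn : 0 ≤ μ2 := by rw [hμ2def, he]; exact hnn _
  -- extract a maximum equidistant set
  have hSet : eqNum G t ∈ {m : ℕ | ∃ S : Finset V, IsEquidistantSet G t S ∧ S.card = m} := by
    apply Nat.sSup_mem
    · exact ⟨0, ∅, by simp [IsEquidistantSet], by simp⟩
    · refine ⟨Fintype.card V, fun m hm => ?_⟩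
      obtain ⟨S, _, hc⟩ := hm
      exact hc ▸ S.card_le_univ
  obtain ⟨S, hSeq, hScard⟩ := hSet
  have hgoalcast : (eqNum G t : ℝ) = (S.card : ℝ) := by rw [hScard]
  rw [hgoalcast]
  set s : ℕ := S.card with hsdef
  have hsn : (s : ℝ) ≤ n := by
    rw [← hn]; exact_mod_cast S.card_le_univ
  have hnpos : (0:ℝ) < n := by positivity
  have hd1 : μ2 / μN ≤ 1 := (div_le_one hpos).mpr hμ2N
  have hd0 : 0 ≤ μ2 / μN := div_nonneg hμ2nn (le_of_lt hpos)
  -- trivial case μ2 = 0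
  by_cases hμ2pos : 0 < μ2
  swap
  · have hz : μ2 = 0 := le_antisymm (not_lt.mp hμ2pos) hμ2nn
    rw [hz]
    simp only [zero_div, sub_zero, mul_one]
    linarith
  -- trivial case s = 0
  rcases Nat.eq_zero_or_pos s with hs0 | hspos
  · rw [hs0]
    push_cast
    nlinarith
  have hsposR : (0:ℝ) < s := by exact_mod_cast hspos
  -- independence of S in H
  have hind : ∀ i ∈ S, ∀ j ∈ S, ¬ H.Adj i j := by
    intro i hi j hj hadj
    rcases eq_or_ne i j with rfl | hne
    · exact H.loopless.irrefl i hadj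
    · rw [hH, SimpleGraph.compl_adj] at hadj
      exact hadj.2 ⟨hne, hSeq hi hj hne⟩
  -- eigenvalue bounds
  have hev : ∀ i : V, hL.eigenvalues i = μ (e.symm i) := by
    intro i; rw [he (e.symm i), Equiv.apply_symm_apply]
  have hhi : ∀ i : V, hL.eigenvalues i ≤ μN := by
    intro i; rw [hev i, hμNdef]
    exact hmono (by simp [Fin.le_def]; omega)
  set i₀ : V := e ⟨0, by omega⟩ with hi₀def
  have hlo : ∀ i : V, i ≠ i₀ → μ2 ≤ hL.eigenvalues i := by
    intro i hi
    rw [hev i, hμ2def]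
    apply hmono
    rw [Fin.le_def]
    rcases Nat.lt_or_ge ((e.symm i : Fin n) : ℕ) 1 with h | h
    · exfalso
      apply hi
      have hv : ((e.symm i : Fin n) : ℕ) = 0 := by omega
      have h0 : e.symm i = ⟨0, by omega⟩ := Fin.ext (by simp [hv])
      rw [hi₀def, ← h0, Equiv.apply_symm_apply]
    · simpa using h
  have hipos : ∀ i : V, i ≠ i₀ → 0 < hL.eigenvalues i :=
    fun i hi => lt_of_lt_of_le hμ2pos (hlo i hi)
  have hone : H.lapMatrix ℝ *ᵥ (fun _ => (1:ℝ)) = 0 :=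
    SimpleGraph.lapMatrix_mulVec_const_eq_zero H
  have : Nonempty V := Fintype.card_pos_iff.mp (by omega)
  -- quadratic form formula
  have quadQ : ∀ x : V → ℝ, x ⬝ᵥ (H.lapMatrix ℝ *ᵥ x) =
      (∑ i, ∑ j, if H.Adj i j then (x i - x j)^2 else 0)/2 := by
    intro x
    rw [← Matrix.toLinearMap₂'_apply', SimpleGraph.lapMatrix_toLinearMap₂']
  set D : V → ℝ := fun u => ∑ j, if H.Adj u j then (1:ℝ) else 0 with hD
  have hDnn : ∀ u, 0 ≤ D u := by
    intro u; apply Finset.sum_nonneg; intro j _; positivity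
  set χ : V → ℝ := fun v => if v ∈ S then 1 else 0 with hχ
  set x : V → ℝ := fun v => χ v - s/n with hx
  -- Q(x) = ∑_{u ∈ S} D u
  have hQx : x ⬝ᵥ (H.lapMatrix ℝ *ᵥ x) = ∑ u ∈ S, D u := by
    rw [quadQ]
    have hterm : ∀ i j : V, (if H.Adj i j then (x i - x j)^2 else 0)
        = (if H.Adj i j then χ i else 0) + (if H.Adj i j then χ j else 0) := by
      intro i j
      by_cases h : H.Adj i j
      · simp only [h, if_true]
        have hij : x i - x j = χ i - χ j := by rw [hx]; ring
        rw [hij]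
        by_cases hi : i ∈ S
        · by_cases hj : j ∈ S
          · exact absurd h (hind i hi j hj)
          · simp [hχ, hi, hj]
        · by_cases hj : j ∈ S
          · simp [hχ, hi, hj]
          · simp [hχ, hi, hj]
      · simp [h]
    simp_rw [hterm, Finset.sum_add_distrib]
    have h1 : ∑ i, ∑ j, (if H.Adj i j then χ i else 0) = ∑ u ∈ S, D u := by
      have : ∀ i : V, ∑ j, (if H.Adj i j then χ i else 0) = χ i * D i := by
        intro i
        rw [hD, Finset.mul_sum]
        apply Finset.sum_congr rfl
        intro j _
        by_cases h : H.Adj i j <;> simp [h]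
      simp_rw [this]
      simp only [hχ]
      exact sum_ite_indicator S D
    have h2 : ∑ i, ∑ j, (if H.Adj i j then χ j else 0) = ∑ u ∈ S, D u := by
      rw [Finset.sum_comm]
      have : ∀ j : V, ∑ i, (if H.Adj i j then χ j else 0) = χ j * D j := by
        intro j
        rw [hD, Finset.mul_sum]
        apply Finset.sum_congr rfl
        intro i _
        have hco : H.Adj i j ↔ H.Adj j i := ⟨fun h => h.symm, fun h => h.symm⟩
        by_cases h : H.Adj i j
        · rw [if_pos h, if_pos (hco.mp h)]; ring
        · rw [if_neg h, if_neg (fun hh => h (hco.mpr hh))]; ring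
      simp_rw [this]
      simp only [hχ]
      exact sum_ite_indicator S D
    rw [h1, h2]
    ring
    -- per-vertex test vectors
  set y : V → V → ℝ := fun u v => (if v = u then (1:ℝ) else 0) - 1/n with hy
  have hQy : ∀ u : V, (y u) ⬝ᵥ (H.lapMatrix ℝ *ᵥ (y u)) = D u := by
    intro u
    rw [quadQ]
    have hterm : ∀ i j : V, (if H.Adj i j then (y u i - y u j)^2 else 0)
        = (if H.Adj i j then (if i = u then (1:ℝ) else 0) else 0)
          + (if H.Adj i j then (if j = u then (1:ℝ) else 0) else 0) := by
      intro i j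
      by_cases h : H.Adj i j
      · simp only [h, if_true]
        have hij : y u i - y u j = (if i = u then (1:ℝ) else 0) - (if j = u then (1:ℝ) else 0) := by
          simp only [hy]; ring
        rw [hij]
        by_cases hi : i = u
        · by_cases hj : j = u
          · exfalso; rw [hi, hj] at h; exact H.loopless.irrefl u h
          · simp [hi, hj]
        · by_cases hj : j = u
          · simp [hi, hj]
          · simp [hi, hj]
      · simp [h]
    simp_rw [hterm, Finset.sum_add_distrib]
    have h1 : ∑ i, ∑ j, (if H.Adj i j then (if i = u then (1:ℝ) else 0) else 0) = D u := by
      have hin : ∀ i : V, ∑ j, (if H.Adj i j then (if i = u then (1:ℝ) else 0) else 0)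
          = (if i = u then (1:ℝ) else 0) * D i := by
        intro i
        rw [hD, Finset.mul_sum]
        apply Finset.sum_congr rfl
        intro j _
        by_cases h : H.Adj i j <;> simp [h]
      simp_rw [hin]
      simp [ite_mul, Finset.sum_ite_eq']
    have h2 : ∑ i, ∑ j, (if H.Adj i j then (if j = u then (1:ℝ) else 0) else 0) = D u := by
      rw [Finset.sum_comm]
      have hin : ∀ j : V, ∑ i, (if H.Adj i j then (if j = u then (1:ℝ) else 0) else 0)
          = (if j = u then (1:ℝ) else 0) * D j := by
        intro j
        rw [hD, Finset.mul_sum]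
        apply Finset.sum_congr rfl
        intro i _
        have hco : H.Adj i j ↔ H.Adj j i := ⟨fun h => h.symm, fun h => h.symm⟩
        by_cases h : H.Adj i j
        · rw [if_pos h, if_pos (hco.mp h)]; ring
        · rw [if_neg h, if_neg (fun hh => h (hco.mpr hh))]; ring
      simp_rw [hin]
      simp [ite_mul, Finset.sum_ite_eq']
    rw [h1, h2]
    ring
  have hn0 : (n:ℝ) ≠ 0 := ne_of_gt hnpos
  have hχsum : ∑ v, χ v = (s:ℝ) := by
    simp only [hχ]
    rw [Finset.sum_ite_mem]
    simp [hsdef]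
  have hδsum : ∀ u : V, ∑ v, (if v = u then (1:ℝ) else 0) = 1 := by
    intro u; simp
  have hcardsum : ∑ _v : V, (1:ℝ) = (n:ℝ) := by
    simp [Finset.card_univ, hn]
  -- norms and orthogonality
  have horth_x : x ⬝ᵥ (fun _ => (1:ℝ)) = 0 := by
    simp only [dotProduct, mul_one, hx]
    rw [Finset.sum_sub_distrib, hχsum, Finset.sum_const, Finset.card_univ, hn, nsmul_eq_mul]
    field_simp
    ring
  have hxx : x ⬝ᵥ x = (s:ℝ) * ((n:ℝ) - s) / n := by
    simp only [dotProduct, hx]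
    have hv : ∀ v : V, (χ v - (s:ℝ)/n) * (χ v - (s:ℝ)/n)
        = χ v * (1 - 2*((s:ℝ)/n)) + ((s:ℝ)/n)^2 := by
      intro v
      simp only [hχ]
      by_cases h : v ∈ S <;> simp [h] <;> ring
    rw [Finset.sum_congr rfl (fun v _ => hv v), Finset.sum_add_distrib, ← Finset.sum_mul, hχsum]
    rw [Finset.sum_const, Finset.card_univ, hn, nsmul_eq_mul]
    field_simp
    ring
  have horth_y : ∀ u : V, (y u) ⬝ᵥ (fun _ => (1:ℝ)) = 0 := by
    intro u
    simp only [dotProduct, mul_one, hy]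
    rw [Finset.sum_sub_distrib, hδsum, Finset.sum_const, Finset.card_univ, hn, nsmul_eq_mul]
    field_simp
    ring
  have hyy : ∀ u : V, (y u) ⬝ᵥ (y u) = ((n:ℝ) - 1) / n := by
    intro u
    simp only [dotProduct, hy]
    have hv : ∀ v : V, ((if v = u then (1:ℝ) else 0) - 1/n) * ((if v = u then (1:ℝ) else 0) - 1/n)
        = (if v = u then (1:ℝ) else 0) * (1 - 2*(1/(n:ℝ))) + (1/(n:ℝ))^2 := by
      intro v
      by_cases h : v = u <;> simp [h] <;> ring
    rw [Finset.sum_congr rfl (fun v _ => hv v), Finset.sum_add_distrib, ← Finset.sum_mul, hδsum]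
    rw [Finset.sum_const, Finset.card_univ, hn, nsmul_eq_mul]
    field_simp
    ring
  -- apply the Rayleigh bounds
  have key1 : ∑ u ∈ S, D u ≤ μN * ((s:ℝ) * ((n:ℝ) - s) / n) := by
    rw [← hQx, ← hxx]
    exact rayleigh_upper hL μN hhi x
  have key2 : ∀ u ∈ S, μ2 * (((n:ℝ) - 1)/n) ≤ D u := by
    intro u _
    rw [← hQy u, ← hyy u]
    exact rayleigh_lower hL μ2 i₀ hnn hlo hipos hone (y u) (horth_y u)
  have key3 : (s:ℝ) * (μ2 * (((n:ℝ) - 1)/n)) ≤ ∑ u ∈ S, D u := by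
    have h := Finset.card_nsmul_le_sum S D (μ2 * (((n:ℝ) - 1)/n)) key2
    rw [nsmul_eq_mul] at h
    exact_mod_cast h
  have hkey : (s:ℝ) * (μ2 * (((n:ℝ) - 1)/n)) ≤ μN * ((s:ℝ) * ((n:ℝ) - s) / n) :=
    le_trans key3 key1
  have key' : (s:ℝ) * (μ2 * ((n:ℝ) - 1)) ≤ μN * ((s:ℝ) * ((n:ℝ) - s)) := by
    have h := mul_le_mul_of_nonneg_right hkey (le_of_lt hnpos)
    calc (s:ℝ) * (μ2 * ((n:ℝ) - 1)) = (s:ℝ) * (μ2 * (((n:ℝ) - 1)/n)) * n := by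
          field_simp <;> ring
      _ ≤ μN * ((s:ℝ) * ((n:ℝ) - s) / n) * n := h
      _ = μN * ((s:ℝ) * ((n:ℝ) - s)) := by field_simp <;> ring
  have key'' : (s:ℝ) * (μ2 * ((n:ℝ) - 1)) ≤ (s:ℝ) * (μN * ((n:ℝ) - s)) := by
    rw [show (s:ℝ) * (μN * ((n:ℝ) - s)) = μN * ((s:ℝ) * ((n:ℝ) - s)) from by ring]
    exact key'
  have key2' : μ2 * ((n:ℝ) - 1) ≤ μN * ((n:ℝ) - s) := le_of_mul_le_mul_left key'' hsposR
  have hfin : μN * (s:ℝ) ≤ μN * ((n:ℝ) * (1 - μ2/μN) + 1) := by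
    have hexp : μN * ((n:ℝ) * (1 - μ2/μN) + 1) = μN * n - n * μ2 + μN := by
      field_simp <;> ring
    rw [hexp]
    nlinarith [key2', hμ2N]
  exact (mul_le_mul_iff_right₀ hpos).mp hfin
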